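/- Let X = xx* with ||x||_2 = 1, let Δ ∈ H^d satisfy tr(Δ_T) + ||Δ_T^⊥||_1 > 0 where Δ_T = P_T(Δ). Then ||X + Δ||_1 > ||X||_1. (Via the pinching inequality ||X + Δ||_1 ≥ ||X||_1 + tr(Δ_T) + ||Δ_T^⊥||_1.) -/

import Mathlib

open Matrix BigOperators ComplexOrder

/-- The trace norm `‖M‖₁ = tr √(Mᴴ M)`. -/
noncomputable def tnorm {d : ℕ} (M : Matrix (Fin d) (Fin d) ℂ) : ℝ :=
  (((Matrix.posSemidef_conjTranspose_mul_self M).1.eigenvectorUnitary : Matrix (Fin d) (Fin d) ℂ) *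
    diagonal ((fun r : ℝ => (r : ℂ)) ∘ (√·) ∘ (Matrix.posSemidef_conjTranspose_mul_self M).1.eigenvalues) *
    (star (Matrix.posSemidef_conjTranspose_mul_self M).1.eigenvectorUnitary :
      Matrix (Fin d) (Fin d) ℂ)).trace.re

/-- The Frobenius norm `‖M‖₂ = √tr(Mᴴ M)`. -/
noncomputable def fnorm {d : ℕ} (M : Matrix (Fin d) (Fin d) ℂ) : ℝ :=
  Real.sqrt (((Mᴴ * M).trace).re)

/-- The operator norm of a matrix, acting on Euclidean space `ℂ^d`. -/
noncomputable def onorm {d : ℕ} (M : Matrix (Fin d) (Fin d) ℂ) : ℝ :=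
  ‖Matrix.toEuclideanCLM (𝕜 := ℂ) M‖

/-- `P_T(Z) = XZ + ZX − tr(XZ)·X`. -/
noncomputable def PT {d : ℕ} (X Z : Matrix (Fin d) (Fin d) ℂ) : Matrix (Fin d) (Fin d) ℂ :=
  X * Z + Z * X - (X * Z).trace • X

namespace Aux19
variable {d : ℕ}

lemma conj_conj {V : Matrix (Fin d) (Fin d) ℂ} (hV : star V * V = 1)
    (A B : Matrix (Fin d) (Fin d) ℂ) :
    (V * A * star V) * (V * B * star V) = V * (A * B) * star V := by
  simp only [mul_assoc]
  rw [← mul_assoc (star V) V, hV, one_mul]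

lemma trace_conj {V : Matrix (Fin d) (Fin d) ℂ} (hV : star V * V = 1)
    (A : Matrix (Fin d) (Fin d) ℂ) :
    (V * A * star V).trace = A.trace := by
  rw [trace_mul_cycle, hV, one_mul]

lemma diag_herm {V : Matrix (Fin d) (Fin d) ℂ} (f : Fin d → ℝ) :
    (V * Matrix.diagonal (fun i => (f i : ℂ)) * star V).IsHermitian := by
  show _ = _
  simp [conjTranspose_mul, star_eq_conjTranspose, diagonal_conjTranspose, mul_assoc,
    Pi.star_def, Complex.conj_ofReal]

open scoped MatrixOrder in
lemma tnorm_eq_of {M C : Matrix (Fin d) (Fin d) ℂ} (hC : C.PosSemidef) (h : C * C = Mᴴ * M) :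
    tnorm M = C.trace.re := by
  have hMM := posSemidef_conjTranspose_mul_self M
  have e1 : ((hMM.1.eigenvectorUnitary : Matrix (Fin d) (Fin d) ℂ) *
      diagonal ((fun r : ℝ => (r : ℂ)) ∘ (√·) ∘ hMM.1.eigenvalues) *
      (star hMM.1.eigenvectorUnitary : Matrix (Fin d) (Fin d) ℂ)) = cfc Real.sqrt (Mᴴ * M) := by
    rw [hMM.1.cfc_eq, IsHermitian.cfc, Unitary.conjStarAlgAut_apply]; rfl
  have e2 : cfc Real.sqrt (Mᴴ * M) = CFC.sqrt (Mᴴ * M) := by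
    rw [CFC.sqrt_eq_real_sqrt _ (nonneg_iff_posSemidef.mpr hMM), cfcₙ_eq_cfc]
  have e3 : CFC.sqrt (Mᴴ * M) = C := CFC.sqrt_unique h (nonneg_iff_posSemidef.mpr hC)
  unfold tnorm
  rw [e1, e2, e3]

lemma tnorm_herm {M : Matrix (Fin d) (Fin d) ℂ} (hM : M.IsHermitian) :
    tnorm M = ∑ i, |hM.eigenvalues i| := by
  set V : Matrix (Fin d) (Fin d) ℂ := (hM.eigenvectorUnitary : Matrix (Fin d) (Fin d) ℂ) with hVdef
  have hV : star V * V = 1 := Unitary.coe_star_mul_self hM.eigenvectorUnitary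
  set C : Matrix (Fin d) (Fin d) ℂ :=
    V * Matrix.diagonal (fun i => ((|hM.eigenvalues i| : ℝ) : ℂ)) * star V with hCdef
  have hCpsd : C.PosSemidef := by
    have := (Matrix.PosSemidef.diagonal (d := fun i => ((|hM.eigenvalues i| : ℝ) : ℂ))
      (fun i => Complex.zero_le_real.mpr (abs_nonneg _))).mul_mul_conjTranspose_same V
    rwa [← star_eq_conjTranspose] at this
  have hsq : C ^ 2 = Mᴴ * M := by
    rw [hM.eq]
    conv_rhs => rw [hM.spectral_theorem, Unitary.conjStarAlgAut_apply]
    rw [pow_two, hCdef, conj_conj hV, conj_conj hV, diagonal_mul_diagonal,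
      diagonal_mul_diagonal]
    have : (fun i => ((|hM.eigenvalues i| : ℝ) : ℂ) * ((|hM.eigenvalues i| : ℝ) : ℂ))
        = fun i => (RCLike.ofReal ∘ hM.eigenvalues) i * (RCLike.ofReal ∘ hM.eigenvalues) i := by
      funext i
      simp [← Complex.ofReal_mul, abs_mul_abs_self]
    rw [this]
  have hC : tnorm M = C.trace.re := tnorm_eq_of hCpsd (by rw [← pow_two]; exact hsq)
  rw [hC, hCdef, trace_conj hV, trace_diagonal]
  rw [← Complex.ofReal_sum]
  simp

lemma psd_diag_re {N : Matrix (Fin d) (Fin d) ℂ} (hN : N.PosSemidef) (i : Fin d) :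
    0 ≤ (N i i).re := by
  have := hN.re_dotProduct_nonneg (Pi.single i 1)
  simpa [dotProduct, mulVec, Pi.single_apply, Finset.sum_ite_eq, Finset.sum_ite_eq'] using this

lemma re_trace_mul_le {M U : Matrix (Fin d) (Fin d) ℂ} (hM : M.IsHermitian)
    (hU : U.IsHermitian) (hc : ((1 : Matrix (Fin d) (Fin d) ℂ) - U * U).PosSemidef) :
    ((U * M).trace).re ≤ tnorm M := by
  rw [tnorm_herm hM]
  set V : Matrix (Fin d) (Fin d) ℂ := (hM.eigenvectorUnitary : Matrix (Fin d) (Fin d) ℂ)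
    with hVdef
  have hV : star V * V = 1 := Unitary.coe_star_mul_self hM.eigenvectorUnitary
  have hV' : V * star V = 1 := Unitary.coe_mul_star_self hM.eigenvectorUnitary
  set B : Matrix (Fin d) (Fin d) ℂ := star V * U * V with hBdef
  have hBH : ∀ i j, B j i = starRingEnd ℂ (B i j) := by
    intro i j
    have hBherm : Bᴴ = B := by
      simp only [hBdef, conjTranspose_mul, star_eq_conjTranspose, conjTranspose_conjTranspose,
        hU.eq, mul_assoc]
    conv_lhs => rw [← hBherm]
    simp [conjTranspose_apply]
  have hBB : B * B = star V * (U * U) * V := by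
    simp only [hBdef, mul_assoc]
    rw [← mul_assoc V (star V), hV', one_mul]
  have hBc : ((1 : Matrix (Fin d) (Fin d) ℂ) - B * B).PosSemidef := by
    have h1 : (1 : Matrix (Fin d) (Fin d) ℂ) - B * B = star V * (1 - U * U) * V := by
      rw [mul_sub, mul_one, sub_mul, hV, hBB]
    rw [h1]
    have := hc.conjTranspose_mul_mul_same V
    rwa [← star_eq_conjTranspose] at this
  have hdiag : ∀ i, ‖B i i‖ ≤ 1 := by
    intro i
    have h1 : ((B * B) i i).re ≤ 1 := by
      have := psd_diag_re hBc i
      simp only [Matrix.sub_apply, one_apply_eq, Complex.sub_re, Complex.one_re] at this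
      linarith
    have h2 : ‖B i i‖ ^ 2 ≤ ((B * B) i i).re := by
      have hentry : ((B * B) i i).re = ∑ j, Complex.normSq (B i j) := by
        simp only [mul_apply]
        rw [Complex.re_sum]
        congr 1
        funext j
        rw [hBH i j, mul_comm, ← Complex.normSq_eq_conj_mul_self, Complex.ofReal_re]
      rw [hentry, Complex.sq_norm]
      exact Finset.single_le_sum (f := fun j => Complex.normSq (B i j))
        (fun j _ => Complex.normSq_nonneg _) (Finset.mem_univ i)
    nlinarith [norm_nonneg (B i i)]
  have htr : (U * M).trace = (B * Matrix.diagonal (RCLike.ofReal ∘ hM.eigenvalues)).trace := by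
    conv_lhs => rw [hM.spectral_theorem, Unitary.conjStarAlgAut_apply]
    rw [← mul_assoc, ← mul_assoc, trace_mul_cycle, hBdef, mul_assoc (star V) U V]
  rw [htr, trace]
  have hkey : ∀ i, ((B * Matrix.diagonal (RCLike.ofReal ∘ hM.eigenvalues)).diag i).re
      ≤ |hM.eigenvalues i| := by
    intro i
    simp only [diag_apply, mul_diagonal, Function.comp_apply]
    rw [Complex.mul_re]
    have h0 : (RCLike.ofReal (hM.eigenvalues i) : ℂ).im = 0 := Complex.ofReal_im _
    have h1 : (RCLike.ofReal (hM.eigenvalues i) : ℂ).re = hM.eigenvalues i := Complex.ofReal_re _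
    rw [h0, h1, mul_zero, sub_zero]
    calc (B i i).re * hM.eigenvalues i ≤ |(B i i).re * hM.eigenvalues i| := le_abs_self _
      _ = |(B i i).re| * |hM.eigenvalues i| := abs_mul _ _
      _ ≤ 1 * |hM.eigenvalues i| := by
          apply mul_le_mul_of_nonneg_right _ (abs_nonneg _)
          calc |(B i i).re| ≤ ‖B i i‖ := Complex.abs_re_le_norm _
            _ ≤ 1 := hdiag i
      _ = |hM.eigenvalues i| := one_mul _
  rw [Complex.re_sum]
  exact Finset.sum_le_sum fun i _ => hkey i

end Aux19

open Aux19 in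
/-- Pinching: if `tr(Δ_T) + ‖Δ_T^⊥‖₁ > 0`, then `‖X + Δ‖₁ > ‖X‖₁`. -/
theorem stmt19 {d : ℕ} (x : Fin d → ℂ) (hx : ∑ j, ‖x j‖ ^ 2 = 1)
    (X : Matrix (Fin d) (Fin d) ℂ) (hX : X = Matrix.vecMulVec x (star x))
    (Δ : Matrix (Fin d) (Fin d) ℂ) (hΔ : Δ.IsHermitian)
    (h : 0 < ((PT X Δ).trace).re + tnorm (Δ - PT X Δ)) :
    tnorm X < tnorm (X + Δ) := by
  -- basic facts about X
  have hx1 : ∑ k, (star x) k * x k = (1 : ℂ) := by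
    have : ∀ k, (star x) k * x k = ((‖x k‖ ^ 2 : ℝ) : ℂ) := by
      intro k
      simp [Pi.star_apply, ← Complex.normSq_eq_conj_mul_self, Complex.normSq_eq_norm_sq]
    rw [Finset.sum_congr rfl fun k _ => this k, ← Complex.ofReal_sum, hx, Complex.ofReal_one]
  have hXh : X.IsHermitian := by
    rw [hX]
    show _ = _
    ext i j
    simp [conjTranspose_apply, vecMulVec_apply, mul_comm]
  have hXX : X * X = X := by
    rw [hX]
    ext i j
    simp only [mul_apply, vecMulVec_apply]
    calc ∑ k, x i * star x k * (x k * star x j)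
        = (∑ k, (star x) k * x k) * (x i * star x j) := by
          rw [Finset.sum_mul]
          exact Finset.sum_congr rfl fun k _ => by ring
      _ = x i * star x j := by rw [hx1, one_mul]
  have htrX : X.trace = 1 := by
    rw [hX, trace]
    calc ∑ i, (Matrix.vecMulVec x (star x)).diag i = ∑ i, (star x) i * x i := by
          exact Finset.sum_congr rfl fun i _ => by
            simp [diag_apply, vecMulVec_apply, mul_comm]
      _ = 1 := hx1
  have hXpsd : X.PosSemidef := by
    have := Matrix.posSemidef_conjTranspose_mul_self X
    rwa [hXh.eq, hXX] at this
  have hXΔX : X * Δ * X = (X * Δ).trace • X := by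
    rw [hX]
    ext i j
    simp only [mul_apply, Matrix.smul_apply, trace, diag_apply, vecMulVec_apply, smul_eq_mul,
      Finset.sum_mul, Finset.mul_sum]
    rw [Finset.sum_comm]
    conv_rhs => rw [Finset.sum_comm]
    refine Finset.sum_congr rfl fun l _ => ?_
    refine Finset.sum_congr rfl fun k _ => ?_
    ring
  -- tnorm X = 1
  have htnX : tnorm X = 1 := by
    have hXsq : X ^ 2 = Xᴴ * X := by rw [hXh.eq, pow_two]
    have := tnorm_eq_of hXpsd (by rw [hXh.eq] : X * X = Xᴴ * X)
    rw [this, htrX, Complex.one_re]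
  -- Q = 1 - X
  obtain ⟨Q, hQdef⟩ : ∃ Q : Matrix (Fin d) (Fin d) ℂ, Q = 1 - X := ⟨_, rfl⟩
  have hQX : Q * X = 0 := by rw [hQdef, sub_mul, one_mul, hXX, sub_self]
  have hXQ : X * Q = 0 := by rw [hQdef, mul_sub, mul_one, hXX, sub_self]
  have hQQ : Q * Q = Q := by
    rw [hQdef, sub_mul, one_mul, mul_sub, mul_one, hXX]
    abel
  have hQh : Q.IsHermitian := by rw [hQdef]; exact Matrix.isHermitian_one.sub hXh
  have hQpsd : Q.PosSemidef := by
    have := Matrix.posSemidef_conjTranspose_mul_self Q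
    rwa [hQh.eq, hQQ] at this
  -- A = QΔQ = Δ - PT X Δ
  obtain ⟨A, hAdef⟩ : ∃ A : Matrix (Fin d) (Fin d) ℂ, A = Q * Δ * Q := ⟨_, rfl⟩
  have hA_eq : A = Δ - PT X Δ := by
    have hexp : A = Δ - X * Δ - Δ * X + X * Δ * X := by
      rw [hAdef, hQdef]
      simp only [sub_mul, mul_sub, one_mul, mul_one]
      abel
    rw [hexp, hXΔX, PT]
    abel
  have hAh : A.IsHermitian := by
    show _ = _
    rw [hAdef]
    simp only [conjTranspose_mul, hΔ.eq, hQh.eq, mul_assoc]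
  -- the sign unitary S of A
  obtain ⟨s, hsdef⟩ : ∃ s : Fin d → ℝ,
      s = fun i => if hAh.eigenvalues i < 0 then (-1 : ℝ) else 1 := ⟨_, rfl⟩
  obtain ⟨Va, hVadef⟩ : ∃ Va : Matrix (Fin d) (Fin d) ℂ,
      Va = (hAh.eigenvectorUnitary : Matrix (Fin d) (Fin d) ℂ) := ⟨_, rfl⟩
  have hVa : star Va * Va = 1 := by
    rw [hVadef]; exact Unitary.coe_star_mul_self hAh.eigenvectorUnitary
  have hVa' : Va * star Va = 1 := by
    rw [hVadef]; exact Unitary.coe_mul_star_self hAh.eigenvectorUnitary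
  obtain ⟨S, hSdef⟩ : ∃ S : Matrix (Fin d) (Fin d) ℂ,
      S = Va * Matrix.diagonal (fun i => ((s i : ℝ) : ℂ)) * star Va := ⟨_, rfl⟩
  have hSh : S.IsHermitian := by rw [hSdef]; exact diag_herm s
  have hSS : S * S = 1 := by
    rw [hSdef, conj_conj hVa, diagonal_mul_diagonal]
    have : (fun i => ((s i : ℝ) : ℂ) * ((s i : ℝ) : ℂ)) = fun _ => (1 : ℂ) := by
      funext i
      rw [hsdef]
      by_cases hc : hAh.eigenvalues i < 0 <;> simp [hc]
    rw [this, diagonal_one, mul_one, hVa']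
  have htrSA : ((S * A).trace).re = tnorm A := by
    have hSA : S * A = Va * Matrix.diagonal (fun i => ((s i * hAh.eigenvalues i : ℝ) : ℂ))
        * star Va := by
      conv_lhs => rw [hSdef, hAh.spectral_theorem, Unitary.conjStarAlgAut_apply]
      rw [← hVadef, conj_conj hVa, diagonal_mul_diagonal]
      congr 2
      funext i
      simp [Complex.ofReal_mul]
    rw [hSA, trace_conj hVa, trace_diagonal, tnorm_herm hAh, ← Complex.ofReal_sum,
      Complex.ofReal_re]
    refine Finset.sum_congr rfl fun i _ => ?_
    rw [hsdef]
    by_cases hc : hAh.eigenvalues i < 0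
    · simp [hc, abs_of_neg hc]
    · simp [hc, abs_of_nonneg (not_lt.mp hc)]
  -- the contraction U
  obtain ⟨U, hUdef⟩ : ∃ U : Matrix (Fin d) (Fin d) ℂ, U = X + Q * S * Q := ⟨_, rfl⟩
  have hQSQh : (Q * S * Q).IsHermitian := by
    show _ = _
    simp only [conjTranspose_mul, hSh.eq, hQh.eq, mul_assoc]
  have hUh : U.IsHermitian := by rw [hUdef]; exact hXh.add hQSQh
  have hXQSQ : X * (Q * S * Q) = 0 := by
    rw [← mul_assoc, ← mul_assoc, hXQ, zero_mul, zero_mul]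
  have hQSQX : (Q * S * Q) * X = 0 := by
    rw [mul_assoc (Q * S) Q X, hQX, mul_zero]
  have hQSQ2 : (Q * S * Q) * (Q * S * Q) = Q * (S * Q * S) * Q := by
    simp only [mul_assoc]
    rw [← mul_assoc Q Q (S * Q), hQQ]
  have hUc : (1 : Matrix (Fin d) (Fin d) ℂ) - U * U = Q * (S * X * S) * Q := by
    have hUU : U * U = X + Q * (S * Q * S) * Q := by
      rw [hUdef, add_mul, mul_add, mul_add, hXX, hXQSQ, hQSQX, hQSQ2]
      abel
    have hSXS : S * X * S = 1 - S * Q * S := by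
      have : X = 1 - Q := by rw [hQdef]; abel
      rw [this, mul_sub, sub_mul, mul_one, hSS]
    rw [hUU, hSXS, mul_sub, sub_mul, mul_one, hQQ, hQdef]
    try abel
  have hUcpsd : ((1 : Matrix (Fin d) (Fin d) ℂ) - U * U).PosSemidef := by
    rw [hUc]
    have h1 : (S * X * S).PosSemidef := by
      have := hXpsd.mul_mul_conjTranspose_same S
      rwa [hSh.eq] at this
    have := h1.mul_mul_conjTranspose_same Q
    rwa [hQh.eq] at this
  -- trace computation
  have htrU : ((U * (X + Δ)).trace).re = 1 + ((X * Δ).trace).re + tnorm A := by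
    have hsplit : U * (X + Δ) = X * X + X * Δ + (Q * S * Q) * (X + Δ) := by
      rw [hUdef, add_mul, mul_add]
    have htr2 : ((Q * S * Q) * (X + Δ)).trace = (S * A).trace := by
      have e0 : Q * (X + Δ) = Q * Δ := by rw [mul_add, hQX, zero_add]
      have e1 : (Q * S * Q) * (X + Δ) = (Q * S) * (Q * Δ) := by
        rw [mul_assoc (Q * S) Q (X + Δ), e0]
      have e2 : (Q * Δ) * (Q * S) = A * S := by rw [hAdef]; simp only [mul_assoc]
      rw [e1, trace_mul_comm, e2, trace_mul_comm]
    rw [hsplit, trace_add, trace_add, htr2, hXX, htrX, Complex.add_re, Complex.add_re,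
      Complex.one_re, htrSA]
  -- PT trace
  have htrPT : ((PT X Δ).trace).re = ((X * Δ).trace).re := by
    rw [PT, trace_sub, trace_add, trace_smul, trace_mul_comm Δ X, htrX, smul_eq_mul, mul_one]
    simp [Complex.add_re, Complex.sub_re]
  -- conclusion
  have hMh : (X + Δ).IsHermitian := hXh.add hΔ
  have hfinal : ((U * (X + Δ)).trace).re ≤ tnorm (X + Δ) :=
    re_trace_mul_le hMh hUh hUcpsd
  rw [htrU] at hfinal
  rw [htnX]
  have hAtn : tnorm A = tnorm (Δ - PT X Δ) := by rw [hA_eq]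
  rw [hAtn, ← htrPT] at hfinal
  linarith
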